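/- Let w be a word of length n, 𝒫 a Parikh vector of norm p = |𝒫|, and e a position with e + 1 ≤ n − 1. Suppose (b₁,h₁,t₁,e) and (b₂,h₂,t₂,e) are occurrences with abelian period 𝒫 in w, ending at the same position e, with t₂ ≤ t₁. If 𝒫_{w[e−t₁+1..e+1]} ⊆ 𝒫 (so that the occurrence with the longer tail extends to position e+1), then 𝒫_{w[e−t₂+1..e+1]} ⊆ 𝒫, and consequently (b₂, h₂, (t₂+1) mod p, e+1) is an occurrence with abelian period 𝒫 in w. -/

import Mathlib

/-- The Parikh vector of a word `v`: the number of occurrences of each letter. -/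
def parikh {α : Type*} [DecidableEq α] (v : List α) : α → ℕ := fun a => v.count a

/-- The norm of a Parikh vector: the sum of its components. -/
def pnorm {α : Type*} [Fintype α] (P : α → ℕ) : ℕ := ∑ a, P a

/-- Non-strict containment of Parikh vectors: `P ⊆ Q`. -/
def PLe {α : Type*} (P Q : α → ℕ) : Prop := ∀ a, P a ≤ Q a

/-- Strict containment of Parikh vectors: `P ⊂ Q`, i.e. componentwise `≤` and smaller norm. -/
def PLt {α : Type*} [Fintype α] (P Q : α → ℕ) : Prop :=
  (∀ a, P a ≤ Q a) ∧ pnorm P < pnorm Q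

/-- The substring `w[i..j]` of `w`, from position `i` to position `j`, both included. -/
def substr {α : Type*} (w : List α) (i j : ℕ) : List α := (w.drop i).take (j + 1 - i)

/-- `(b,h,t,e)` is an occurrence of a substring of `w` with abelian period `P`:
`w[b..e] = u₀u₁⋯u_{k-1}u_k` for some `k ≥ 2`, with `|u₀| = h`, `|u_k| = t`,
`𝒫_{u_1} = ⋯ = 𝒫_{u_{k-1}} = P`, `𝒫_{u₀} ⊂ P` and `𝒫_{u_k} ⊂ P`. -/
def IsOcc {α : Type*} [Fintype α] [DecidableEq α]
    (w : List α) (P : α → ℕ) (b h t e : ℕ) : Prop :=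
  b ≤ e ∧ e < w.length ∧
  ∃ (u0 uk : List α) (us : List (List α)),
    substr w b e = u0 ++ us.flatten ++ uk ∧
    u0.length = h ∧ uk.length = t ∧
    1 ≤ us.length ∧
    (∀ u ∈ us, parikh u = P) ∧
    PLt (parikh u0) P ∧ PLt (parikh uk) P

/-- An occurrence `(b,h,t,e)` with abelian period `P` is left-maximal if there is no
occurrence `(b-1,h',t',e)` with the same abelian period `P`. -/
def LeftMaximal {α : Type*} [Fintype α] [DecidableEq α]
    (w : List α) (P : α → ℕ) (b h t e : ℕ) : Prop :=
  IsOcc w P b h t e ∧ ∀ b' h' t', b' + 1 = b → ¬ IsOcc w P b' h' t' e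

/-- An occurrence `(b,h,t,e)` with abelian period `P` is right-maximal if there is no
occurrence `(b,h',t',e+1)` with the same abelian period `P`. -/
def RightMaximal {α : Type*} [Fintype α] [DecidableEq α]
    (w : List α) (P : α → ℕ) (b h t e : ℕ) : Prop :=
  IsOcc w P b h t e ∧ ∀ h' t', ¬ IsOcc w P b h' t' (e + 1)

/-- An abelian run of period `P` is a maximal occurrence `(b,h,t,e)` with abelian period `P`
such that `e - b - h - t + 1 ≥ 2|P|`. -/
def IsAbelianRun {α : Type*} [Fintype α] [DecidableEq α]
    (w : List α) (P : α → ℕ) (b h t e : ℕ) : Prop :=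
  LeftMaximal w P b h t e ∧ RightMaximal w P b h t e ∧
  b + h + t + 2 * pnorm P ≤ e + 1

lemma parikh_append {α : Type*} [DecidableEq α] (u v : List α) :
    parikh (u ++ v) = fun a => parikh u a + parikh v a := by
  funext a; simp [parikh]

lemma pnorm_parikh {α : Type*} [Fintype α] [DecidableEq α] (v : List α) :
    pnorm (parikh v) = v.length := by
  induction v with
  | nil => simp [pnorm, parikh]
  | cons x l ih =>
    simp only [pnorm, parikh, List.count_cons] at *
    simp [Finset.sum_add_distrib, ih]

lemma substr_append {α : Type*} (w : List α) (b j j' : ℕ) (h1 : b ≤ j + 1) (h2 : j ≤ j') :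
    substr w b j ++ substr w (j+1) j' = substr w b j' := by
  unfold substr
  rw [show w.drop (j+1) = (w.drop b).drop (j+1-b) by rw [List.drop_drop]; congr 1; omega,
    ← List.take_add]
  congr 1; omega

lemma substr_drop {α : Type*} (w : List α) (i₁ i₂ j : ℕ) (h : i₁ ≤ i₂) :
    substr w i₂ j = (substr w i₁ j).drop (i₂ - i₁) := by
  unfold substr
  rw [List.drop_take, List.drop_drop]
  congr 1; omega
  congr 1; omega

lemma substr_length {α : Type*} (w : List α) (i j : ℕ) :
    (substr w i j).length = min (j + 1 - i) (w.length - i) := by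
  simp [substr]

/-- If the occurrence with the longer tail ending at `e` extends to `e+1`, then so does any
occurrence ending at `e` with a shorter tail. -/
theorem occ_shorter_tail_extends {α : Type*} [Fintype α] [DecidableEq α]
    (w : List α) (P : α → ℕ) (b₁ h₁ t₁ b₂ h₂ t₂ e : ℕ)
    (hocc₁ : IsOcc w P b₁ h₁ t₁ e) (hocc₂ : IsOcc w P b₂ h₂ t₂ e)
    (htt : t₂ ≤ t₁)
    (he : e + 1 ≤ w.length - 1)
    (hext : PLe (parikh (substr w (e + 1 - t₁) (e + 1))) P) :
    PLe (parikh (substr w (e + 1 - t₂) (e + 1))) P ∧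
      IsOcc w P b₂ h₂ ((t₂ + 1) % pnorm P) (e + 1) := by
  obtain ⟨hb₂e, hew, u0, uk, us, hsplit, hu0len, huklen, huslen, husP, hu0lt, huklt⟩ := hocc₂
  have hwlen : e + 1 < w.length := by omega
  -- basic lengths
  have hsublen : (substr w b₂ e).length = e + 1 - b₂ := by
    rw [substr_length]; omega
  have hlensum : u0.length + us.flatten.length + uk.length = e + 1 - b₂ := by
    have h := congrArg List.length hsplit
    rw [hsublen] at h
    simp only [List.length_append] at h
    omega
  have ht₂le : t₂ ≤ e + 1 - b₂ := by omega
  -- the new tail piece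
  have hbitlen : (substr w (e+1) (e+1)).length = 1 := by
    rw [substr_length]; omega
  -- part 1 : PLe for shorter tail
  have hple : PLe (parikh (substr w (e + 1 - t₂) (e + 1))) P := by
    intro a
    refine le_trans ?_ (hext a)
    rw [substr_drop w (e+1-t₁) (e+1-t₂) (e+1) (by omega)]
    exact List.Sublist.count_le a (List.drop_sublist _ _)
  refine ⟨hple, ?_⟩
  -- uk equals substr w (e+1-t₂) e
  have hukeq : uk = substr w (e + 1 - t₂) e := by
    have hn : (e + 1 - t₂) - b₂ = (u0 ++ us.flatten).length := by
      rw [List.length_append]; omega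
    rw [substr_drop w b₂ (e+1-t₂) e (by omega), hsplit, hn]
    exact List.drop_left.symm
  -- new tail
  set c := substr w (e+1) (e+1) with hc
  have hnewtail : uk ++ c = substr w (e + 1 - t₂) (e + 1) := by
    rw [hukeq]
    exact substr_append w (e+1-t₂) e (e+1) (by omega) (by omega)
  have hnewsplit : substr w b₂ (e+1) = u0 ++ us.flatten ++ (uk ++ c) := by
    rw [← List.append_assoc, ← hsplit]
    exact (substr_append w b₂ e (e+1) (by omega) (by omega)).symm
  have hplenew : PLe (parikh (uk ++ c)) P := by rw [hnewtail]; exact hple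
  have hnlen : (uk ++ c).length = t₂ + 1 := by simp [huklen, hbitlen]
  have hppos : 0 < pnorm P := lt_of_le_of_lt (Nat.zero_le _) hu0lt.2
  have hnorm_le : pnorm (parikh (uk ++ c)) ≤ pnorm P :=
    Finset.sum_le_sum (fun a _ => hplenew a)
  rcases lt_or_eq_of_le hnorm_le with hlt | heq
  · -- shorter than full period
    have hmod : (t₂ + 1) % pnorm P = t₂ + 1 := by
      apply Nat.mod_eq_of_lt
      rw [← hnlen, ← pnorm_parikh (uk ++ c)]; exact hlt
    exact ⟨by omega, hwlen, u0, uk ++ c, us, hnewsplit, hu0len, by rw [hnlen, hmod],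
      huslen, husP, hu0lt, hplenew, hlt⟩
  · -- exactly a full period: absorb into the blocks
    have hfull : parikh (uk ++ c) = P := by
      funext a
      have := (Finset.sum_eq_sum_iff_of_le (fun a _ => hplenew a)).1 heq a (Finset.mem_univ a)
      exact this
    have hmod : (t₂ + 1) % pnorm P = 0 := by
      have : t₂ + 1 = pnorm P := by rw [← hnlen, ← pnorm_parikh (uk ++ c), heq]
      simp [this]
    refine ⟨by omega, hwlen, u0, [], us ++ [uk ++ c], ?_, hu0len, by simp [hmod], by simp,
      ?_, hu0lt, ?_⟩
    · rw [hnewsplit]; simp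
    · intro u hu
      rcases List.mem_append.1 hu with h | h
      · exact husP u h
      · simp at h; rw [h]; exact hfull
    · constructor
      · intro a; simp [parikh]
      · rw [pnorm_parikh]; simpa using hppos
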